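/- Let V₁ and V₂ be isometries defining irreducible quantum Markov chains with the same environment dimension k and system dimensions d₁ and d₂, with stationary states admitting spectral decompositions ρ_lˢˢ = Σ_i π_{l,i} φ_{l,i} φ_{l,i}ᴴ (with (φ_{l,i})_{i=1,…,d_l} an orthonormal basis of ℂ^{d_l} and π_{l,i} ≥ 0, for l = 1,2). Let T₁₂ be the linear map on d₁×d₂ complex matrices T₁₂(X) = V₁ᴴ (X ⊗ 1_k) V₂. Then for every n ≥ 1, the overlap of the stationary output states satisfies: tr( ρ_{V₁}^out(n) · ρ_{V₂}^out(n) ) = Σ_{m,p=1}^{d₁} Σ_{m',p'=1}^{d₂} π_{1,p} π_{2,p'} · | ⟨ φ_{1,p}, ( T₁₂ⁿ( φ_{1,m} φ_{2,m'}ᴴ ) ) φ_{2,p'} ⟩ |². -/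

import Mathlib

open Matrix Filter
open scoped Kronecker ComplexConjugate ComplexOrder

noncomputable section

namespace QMCPaper

/-- The `j`-th block (Kraus operator style) of a `(d₁·k)×d₂` matrix. -/
def blk {d₁ d₂ k : ℕ} (V : Matrix (Fin d₁ × Fin k) (Fin d₂) ℂ) (j : Fin k) :
    Matrix (Fin d₁) (Fin d₂) ℂ :=
  fun a b => V (a, j) b

/-- The Kraus operators of a QMC isometry. -/
def kraus {d k : ℕ} (V : Matrix (Fin d × Fin k) (Fin d) ℂ) (j : Fin k) :
    Matrix (Fin d) (Fin d) ℂ :=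
  blk V j

/-- The transition channel `T_V(X) = Vᴴ (X ⊗ 1_k) V = Σ_j K_jᴴ X K_j`. -/
def chan {d k : ℕ} (V : Matrix (Fin d × Fin k) (Fin d) ℂ)
    (X : Matrix (Fin d) (Fin d) ℂ) : Matrix (Fin d) (Fin d) ℂ :=
  ∑ j : Fin k, (kraus V j)ᴴ * X * kraus V j

/-- The predual channel `T_{V*}(ρ) = Σ_j K_j ρ K_jᴴ`. -/
def predual {d k : ℕ} (V : Matrix (Fin d × Fin k) (Fin d) ℂ)
    (ρ : Matrix (Fin d) (Fin d) ℂ) : Matrix (Fin d) (Fin d) ℂ :=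
  ∑ j : Fin k, kraus V j * ρ * (kraus V j)ᴴ

/-- A state: positive semidefinite matrix of trace one. -/
def IsState {d : ℕ} (ρ : Matrix (Fin d) (Fin d) ℂ) : Prop :=
  ρ.PosSemidef ∧ ρ.trace = 1

/-- `V` is an isometry defining an irreducible QMC with (unique, faithful) stationary
state `ρss`. -/
def IsIrreducible {d k : ℕ} (V : Matrix (Fin d × Fin k) (Fin d) ℂ)
    (ρss : Matrix (Fin d) (Fin d) ℂ) : Prop :=
  Vᴴ * V = 1 ∧ IsState ρss ∧ predual V ρss = ρss ∧ ρss.PosDef ∧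
    ∀ ρ, IsState ρ → predual V ρ = ρ → ρ = ρss

/-- For a word `i = (i_0, …, i_{n-1})`, the operator `K_i = K_{i_{n-1}} ⋯ K_{i_0}`. -/
def krausWord {d k : ℕ} (V : Matrix (Fin d × Fin k) (Fin d) ℂ) {n : ℕ}
    (i : Fin n → Fin k) : Matrix (Fin d) (Fin d) ℂ :=
  ((List.ofFn i).reverse.map (kraus V)).prod

/-- The output state at time `n` with initial system state `ρ`:
its `(i,j)` entry is `tr(K_i ρ K_jᴴ)`. -/
def outState {d k : ℕ} (V : Matrix (Fin d × Fin k) (Fin d) ℂ)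
    (ρ : Matrix (Fin d) (Fin d) ℂ) (n : ℕ) :
    Matrix (Fin n → Fin k) (Fin n → Fin k) ℂ :=
  fun i j => (krausWord V i * ρ * (krausWord V j)ᴴ).trace

/-- Output equivalence (with given initial states): equality of all output states. -/
def OutputEquiv {d₁ d₂ k : ℕ}
    (V₁ : Matrix (Fin d₁ × Fin k) (Fin d₁) ℂ) (ρ₁ : Matrix (Fin d₁) (Fin d₁) ℂ)
    (V₂ : Matrix (Fin d₂ × Fin k) (Fin d₂) ℂ) (ρ₂ : Matrix (Fin d₂) (Fin d₂) ℂ) : Prop :=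
  ∀ n : ℕ, 1 ≤ n → ∀ i j : Fin n → Fin k,
    (krausWord V₁ i * ρ₁ * (krausWord V₁ j)ᴴ).trace =
      (krausWord V₂ i * ρ₂ * (krausWord V₂ j)ᴴ).trace

/-- A (possibly rectangular) unitary matrix. -/
def IsUnitaryMat {d₁ d₂ : ℕ} (W : Matrix (Fin d₁) (Fin d₂) ℂ) : Prop :=
  Wᴴ * W = 1 ∧ W * Wᴴ = 1

end QMCPaper

namespace QMCPaper

/-- The map `T₁₂(X) = V₁ᴴ (X ⊗ 1_k) V₂` between two QMCs. -/
def chan12 {d₁ d₂ k : ℕ} (V₁ : Matrix (Fin d₁ × Fin k) (Fin d₁) ℂ)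
    (V₂ : Matrix (Fin d₂ × Fin k) (Fin d₂) ℂ)
    (X : Matrix (Fin d₁) (Fin d₂) ℂ) : Matrix (Fin d₁) (Fin d₂) ℂ :=
  V₁ᴴ * (X ⊗ₖ (1 : Matrix (Fin k) (Fin k) ℂ)) * V₂


/-! ### Auxiliary lemmas -/

lemma aux_dot_adj {a b : Type*} [Fintype a] [Fintype b]
    (M : Matrix b a ℂ) (u : a → ℂ) (x : b → ℂ) :
    star u ⬝ᵥ (Mᴴ *ᵥ x) = star (M *ᵥ u) ⬝ᵥ x := by
  rw [dotProduct_mulVec, star_mulVec]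

lemma aux_dot_conj {a : Type*} [Fintype a] (u v : a → ℂ) :
    star u ⬝ᵥ v = conj (star v ⬝ᵥ u) := by
  simp [dotProduct, Finset.mul_sum, mul_comm]

lemma aux_vecMulVec_mulVec {a b : Type*} [Fintype a] [Fintype b]
    (x : a → ℂ) (y v : b → ℂ) :
    vecMulVec x y *ᵥ v = (y ⬝ᵥ v) • x := by
  ext i
  simp only [mulVec, vecMulVec_apply, dotProduct, Pi.smul_apply, smul_eq_mul, Finset.sum_mul,
    Finset.mul_sum]
  exact Finset.sum_congr rfl fun j _ => by ring

lemma aux_trace_sandwich {a b : Type*} [Fintype a] [Fintype b]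
    (A C : Matrix b a ℂ) (u : a → ℂ) :
    (A * vecMulVec u (star u) * Cᴴ).trace = star (C *ᵥ u) ⬝ᵥ (A *ᵥ u) := by
  simp only [Matrix.trace, Matrix.diag, Matrix.mul_apply, vecMulVec_apply,
    conjTranspose_apply, dotProduct, mulVec, Pi.star_apply, Complex.star_def, map_sum,
    _root_.map_mul, Finset.mul_sum, Finset.sum_mul]
  exact Finset.sum_congr rfl fun x _ => by
    rw [Finset.sum_comm]
    exact Finset.sum_congr rfl fun j _ => Finset.sum_congr rfl fun l _ => by ring

lemma aux_complete {d : ℕ} (φ : Fin d → Fin d → ℂ)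
    (hon : ∀ m p, star (φ m) ⬝ᵥ φ p = if m = p then (1 : ℂ) else 0) (a b : Fin d) :
    ∑ m, φ m a * conj (φ m b) = if a = b then (1 : ℂ) else 0 := by
  let Φ : Matrix (Fin d) (Fin d) ℂ := fun m x => φ m x
  have h1 : Φ * Φᴴ = 1 := by
    ext m p
    simp only [Matrix.mul_apply, Matrix.one_apply, Matrix.conjTranspose_apply]
    calc ∑ j, Φ m j * star (Φ p j) = conj (∑ j, conj (φ m j) * φ p j) := by
          simp [Finset.mul_sum, mul_comm, Φ, Complex.star_def]
      _ = _ := by rw [show ∑ j, conj (φ m j) * φ p j = _ from hon m p]; split <;> simp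
  have h2 : Φᴴ * Φ = 1 := mul_eq_one_comm.mp h1
  have h3 := congrFun (congrFun h2 b) a
  simp only [Matrix.mul_apply, Matrix.conjTranspose_apply, Matrix.one_apply, Φ] at h3
  rw [show (if a = b then (1:ℂ) else 0) = if b = a then (1:ℂ) else 0 by simp [eq_comm], ← h3]
  exact Finset.sum_congr rfl fun m _ => by rw [mul_comm]; simp [Complex.star_def, Matrix.conjTranspose_apply]; exact Or.inl rfl

lemma aux_parseval {d : ℕ} (φ : Fin d → Fin d → ℂ)
    (hon : ∀ m p, star (φ m) ⬝ᵥ φ p = if m = p then (1 : ℂ) else 0) (w w' : Fin d → ℂ) :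
    ∑ m, (star w ⬝ᵥ φ m) * conj (star w' ⬝ᵥ φ m) = star w ⬝ᵥ w' := by
  have key : ∀ m, (star w ⬝ᵥ φ m) * conj (star w' ⬝ᵥ φ m)
      = star w ⬝ᵥ (vecMulVec (φ m) (star (φ m)) *ᵥ w') := by
    intro m
    rw [aux_vecMulVec_mulVec, dotProduct_smul, smul_eq_mul, mul_comm]
    congr 1
    rw [aux_dot_conj w' (φ m)]
    congr 1
    rw [aux_dot_conj (φ m) w']
    simp
  simp only [key]
  have hsum : ∑ m, vecMulVec (φ m) (star (φ m)) = (1 : Matrix (Fin d) (Fin d) ℂ) := by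
    ext a b
    simp only [Matrix.sum_apply, vecMulVec_apply, Pi.star_apply, Matrix.one_apply,
      Complex.star_def]
    exact aux_complete φ hon a b
  have : ∑ m, star w ⬝ᵥ (vecMulVec (φ m) (star (φ m)) *ᵥ w')
      = star w ⬝ᵥ ((∑ m, vecMulVec (φ m) (star (φ m))) *ᵥ w') := by
    simp only [dotProduct, mulVec, Matrix.sum_apply, Finset.sum_mul, Finset.mul_sum]
    rw [Finset.sum_comm]
    exact Finset.sum_congr rfl fun a _ => by rw [Finset.sum_comm]
  rw [this, hsum, Matrix.one_mulVec]

lemma chan12_sum {d₁ d₂ k : ℕ} (V₁ : Matrix (Fin d₁ × Fin k) (Fin d₁) ℂ)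
    (V₂ : Matrix (Fin d₂ × Fin k) (Fin d₂) ℂ) (X : Matrix (Fin d₁) (Fin d₂) ℂ) :
    chan12 V₁ V₂ X = ∑ j : Fin k, (blk V₁ j)ᴴ * X * blk V₂ j := by
  ext a b
  simp only [chan12, Matrix.mul_apply, Matrix.conjTranspose_apply, Matrix.sum_apply,
    kroneckerMap_apply, Matrix.one_apply, blk, Fintype.sum_prod_type]
  rw [Finset.sum_comm]
  refine Finset.sum_congr rfl fun j _ => ?_
  refine Finset.sum_congr rfl fun e _ => ?_
  congr 1
  refine Finset.sum_congr rfl fun c _ => ?_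
  rw [Finset.sum_eq_single j] <;> simp +contextual [eq_comm]

lemma krausWord_cons {d k : ℕ} (V : Matrix (Fin d × Fin k) (Fin d) ℂ) {n : ℕ}
    (j : Fin k) (i : Fin n → Fin k) :
    krausWord V (Fin.cons j i) = krausWord V i * kraus V j := by
  simp [krausWord, List.ofFn_succ, Fin.cons_succ]

lemma krausWord_zero {d k : ℕ} (V : Matrix (Fin d × Fin k) (Fin d) ℂ)
    (i : Fin 0 → Fin k) : krausWord V i = 1 := by
  simp [krausWord]

lemma chan12_iterate {d₁ d₂ k : ℕ} (V₁ : Matrix (Fin d₁ × Fin k) (Fin d₁) ℂ)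
    (V₂ : Matrix (Fin d₂ × Fin k) (Fin d₂) ℂ) (X : Matrix (Fin d₁) (Fin d₂) ℂ) (n : ℕ) :
    (chan12 V₁ V₂)^[n] X
      = ∑ i : Fin n → Fin k, (krausWord V₁ i)ᴴ * X * krausWord V₂ i := by
  induction n with
  | zero => simp [krausWord_zero]
  | succ n ih =>
      rw [Function.iterate_succ_apply', ih, chan12_sum,
        ← (Fin.consEquiv fun _ : Fin (n+1) => Fin k).sum_comp
          (fun i => (krausWord V₁ i)ᴴ * X * krausWord V₂ i), Fintype.sum_prod_type]
      refine Finset.sum_congr rfl fun j _ => ?_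
      rw [Matrix.mul_sum, Matrix.sum_mul]
      refine Finset.sum_congr rfl fun i _ => ?_
      have : (Fin.consEquiv fun _ : Fin (n+1) => Fin k) (j, i) = Fin.cons j i := rfl
      rw [this, krausWord_cons, krausWord_cons, Matrix.conjTranspose_mul]
      show (blk V₁ j)ᴴ * ((krausWord V₁ i)ᴴ * X * krausWord V₂ i) * blk V₂ j = _
      simp [Matrix.mul_assoc, kraus]

lemma sum4_rot {α β γ δ M : Type*} [Fintype α] [Fintype β] [Fintype γ] [Fintype δ]
    [AddCommMonoid M] (f : α → β → γ → δ → M) :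
    ∑ a, ∑ b, ∑ c, ∑ d, f a b c d = ∑ c, ∑ d, ∑ a, ∑ b, f a b c d := by
  calc ∑ a, ∑ b, ∑ c, ∑ d, f a b c d
      = ∑ a, ∑ c, ∑ b, ∑ d, f a b c d :=
        Finset.sum_congr rfl fun a _ => Finset.sum_comm
    _ = ∑ c, ∑ a, ∑ b, ∑ d, f a b c d := Finset.sum_comm
    _ = ∑ c, ∑ a, ∑ d, ∑ b, f a b c d :=
        Finset.sum_congr rfl fun c _ => Finset.sum_congr rfl fun a _ => Finset.sum_comm
    _ = ∑ c, ∑ d, ∑ a, ∑ b, f a b c d :=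
        Finset.sum_congr rfl fun c _ => Finset.sum_comm

lemma sum4_swap {α β γ δ M : Type*} [Fintype α] [Fintype β] [Fintype γ] [Fintype δ]
    [AddCommMonoid M] (f : α → β → γ → δ → M) :
    ∑ a, ∑ b, ∑ c, ∑ d, f a b c d = ∑ b, ∑ d, ∑ a, ∑ c, f a b c d := by
  calc ∑ a, ∑ b, ∑ c, ∑ d, f a b c d
      = ∑ b, ∑ a, ∑ c, ∑ d, f a b c d := Finset.sum_comm
    _ = ∑ b, ∑ a, ∑ d, ∑ c, f a b c d :=
        Finset.sum_congr rfl fun b _ => Finset.sum_congr rfl fun a _ => Finset.sum_comm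
    _ = ∑ b, ∑ d, ∑ a, ∑ c, f a b c d :=
        Finset.sum_congr rfl fun b _ => Finset.sum_comm

lemma aux_sumMat_mulVec {a b ι : Type*} [Fintype a] [Fintype b] [Fintype ι]
    (M : ι → Matrix a b ℂ) (v : b → ℂ) :
    (∑ i, M i) *ᵥ v = ∑ i, M i *ᵥ v := by
  ext x
  simp only [mulVec, dotProduct, Matrix.sum_apply, Finset.sum_apply, Finset.sum_mul]
  exact Finset.sum_comm

lemma aux_dot_sum {a ι : Type*} [Fintype a] [Fintype ι]
    (u : a → ℂ) (w : ι → a → ℂ) :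
    u ⬝ᵥ (∑ i, w i) = ∑ i, u ⬝ᵥ w i := by
  simp only [dotProduct, Finset.sum_apply, Finset.mul_sum]
  exact Finset.sum_comm

/-- Lemma: overlap formula for stationary output states. -/
theorem outState_overlap {d₁ d₂ k : ℕ}
    (V₁ : Matrix (Fin d₁ × Fin k) (Fin d₁) ℂ) (ρ₁ : Matrix (Fin d₁) (Fin d₁) ℂ)
    (V₂ : Matrix (Fin d₂ × Fin k) (Fin d₂) ℂ) (ρ₂ : Matrix (Fin d₂) (Fin d₂) ℂ)
    (h₁ : IsIrreducible V₁ ρ₁) (h₂ : IsIrreducible V₂ ρ₂)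
    (π₁ : Fin d₁ → ℝ) (φ₁ : Fin d₁ → Fin d₁ → ℂ)
    (π₂ : Fin d₂ → ℝ) (φ₂ : Fin d₂ → Fin d₂ → ℂ)
    (hπ₁ : ∀ i, 0 ≤ π₁ i) (hπ₂ : ∀ i, 0 ≤ π₂ i)
    (hon₁ : ∀ m p, star (φ₁ m) ⬝ᵥ φ₁ p = if m = p then (1 : ℂ) else 0)
    (hon₂ : ∀ m p, star (φ₂ m) ⬝ᵥ φ₂ p = if m = p then (1 : ℂ) else 0)
    (hdecomp₁ : ρ₁ = ∑ i, (π₁ i : ℂ) • Matrix.vecMulVec (φ₁ i) (star (φ₁ i)))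
    (hdecomp₂ : ρ₂ = ∑ i, (π₂ i : ℂ) • Matrix.vecMulVec (φ₂ i) (star (φ₂ i))) :
    ∀ n : ℕ, 1 ≤ n →
      (outState V₁ ρ₁ n * outState V₂ ρ₂ n).trace =
        ∑ m : Fin d₁, ∑ p : Fin d₁, ∑ m' : Fin d₂, ∑ p' : Fin d₂,
          ((π₁ p : ℂ) * (π₂ p' : ℂ)) *
            ((‖star (φ₁ p) ⬝ᵥ
                (((chan12 V₁ V₂)^[n] (Matrix.vecMulVec (φ₁ m) (star (φ₂ m')))) *ᵥ φ₂ p')‖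
              ^ 2 : ℝ) : ℂ) := by
  intro n hn
  -- Expand the trace of the product of output states.
  have hL : (outState V₁ ρ₁ n * outState V₂ ρ₂ n).trace
      = ∑ i : Fin n → Fin k, ∑ j : Fin n → Fin k,
          (krausWord V₁ i * ρ₁ * (krausWord V₁ j)ᴴ).trace *
            (krausWord V₂ j * ρ₂ * (krausWord V₂ i)ᴴ).trace := by
    simp [outState, Matrix.trace, Matrix.diag, Matrix.mul_apply]
  -- Trace of sandwiched states via the spectral decompositions.
  have htr₁ : ∀ i j : Fin n → Fin k, (krausWord V₁ i * ρ₁ * (krausWord V₁ j)ᴴ).trace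
      = ∑ p, (π₁ p : ℂ) * (star (krausWord V₁ j *ᵥ φ₁ p) ⬝ᵥ (krausWord V₁ i *ᵥ φ₁ p)) := by
    intro i j
    rw [hdecomp₁, Matrix.mul_sum, Matrix.sum_mul, Matrix.trace_sum]
    refine Finset.sum_congr rfl fun p _ => ?_
    rw [Matrix.mul_smul, Matrix.smul_mul, Matrix.trace_smul, aux_trace_sandwich,
      smul_eq_mul]
  have htr₂ : ∀ i j : Fin n → Fin k, (krausWord V₂ i * ρ₂ * (krausWord V₂ j)ᴴ).trace
      = ∑ p, (π₂ p : ℂ) * (star (krausWord V₂ j *ᵥ φ₂ p) ⬝ᵥ (krausWord V₂ i *ᵥ φ₂ p)) := by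
    intro i j
    rw [hdecomp₂, Matrix.mul_sum, Matrix.sum_mul, Matrix.trace_sum]
    refine Finset.sum_congr rfl fun p _ => ?_
    rw [Matrix.mul_smul, Matrix.smul_mul, Matrix.trace_smul, aux_trace_sandwich,
      smul_eq_mul]
  -- Canonical form of the left-hand side.
  have hLHS : (outState V₁ ρ₁ n * outState V₂ ρ₂ n).trace
      = ∑ p : Fin d₁, ∑ p' : Fin d₂, ∑ i : Fin n → Fin k, ∑ j : Fin n → Fin k,
          ((π₁ p : ℂ) * (π₂ p' : ℂ)) *
            ((star (krausWord V₁ j *ᵥ φ₁ p) ⬝ᵥ (krausWord V₁ i *ᵥ φ₁ p)) *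
              (star (krausWord V₂ i *ᵥ φ₂ p') ⬝ᵥ (krausWord V₂ j *ᵥ φ₂ p'))) := by
    rw [hL]
    have hterm : ∀ i j : Fin n → Fin k,
        (krausWord V₁ i * ρ₁ * (krausWord V₁ j)ᴴ).trace *
          (krausWord V₂ j * ρ₂ * (krausWord V₂ i)ᴴ).trace
        = ∑ p : Fin d₁, ∑ p' : Fin d₂,
            ((π₁ p : ℂ) * (π₂ p' : ℂ)) *
              ((star (krausWord V₁ j *ᵥ φ₁ p) ⬝ᵥ (krausWord V₁ i *ᵥ φ₁ p)) *
                (star (krausWord V₂ i *ᵥ φ₂ p') ⬝ᵥ (krausWord V₂ j *ᵥ φ₂ p'))) := by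
      intro i j
      rw [htr₁, htr₂, Finset.sum_mul_sum]
      exact Finset.sum_congr rfl fun p _ => Finset.sum_congr rfl fun p' _ => by ring
    simp only [hterm]
    exact sum4_rot _
  rw [hLHS]
  -- Expansion of the iterated channel applied to a rank-one matrix.
  have hz : ∀ (m p : Fin d₁) (m' p' : Fin d₂),
      star (φ₁ p) ⬝ᵥ (((chan12 V₁ V₂)^[n] (Matrix.vecMulVec (φ₁ m) (star (φ₂ m')))) *ᵥ φ₂ p')
      = ∑ i : Fin n → Fin k,
          (star (krausWord V₁ i *ᵥ φ₁ p) ⬝ᵥ φ₁ m) *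
            conj (star (krausWord V₂ i *ᵥ φ₂ p') ⬝ᵥ φ₂ m') := by
    intro m p m' p'
    rw [chan12_iterate, aux_sumMat_mulVec, aux_dot_sum]
    refine Finset.sum_congr rfl fun i _ => ?_
    rw [← Matrix.mulVec_mulVec, ← Matrix.mulVec_mulVec, aux_vecMulVec_mulVec,
      Matrix.mulVec_smul, dotProduct_smul, smul_eq_mul, aux_dot_adj, mul_comm]
    congr 1
    rw [aux_dot_conj]
  -- Rewrite |z|² as z * conj z and reduce the right-hand side.
  have habs : ∀ z : ℂ, ((‖z‖ ^ 2 : ℝ) : ℂ) = z * conj z := by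
    intro z
    rw [Complex.sq_norm, Complex.mul_conj]
  simp only [habs, hz]
  -- Expand the squared modulus of the sum into a double sum.
  have hzz : ∀ (m p : Fin d₁) (m' p' : Fin d₂),
      (∑ i : Fin n → Fin k,
          (star (krausWord V₁ i *ᵥ φ₁ p) ⬝ᵥ φ₁ m) *
            conj (star (krausWord V₂ i *ᵥ φ₂ p') ⬝ᵥ φ₂ m')) *
        conj (∑ j : Fin n → Fin k,
          (star (krausWord V₁ j *ᵥ φ₁ p) ⬝ᵥ φ₁ m) *
            conj (star (krausWord V₂ j *ᵥ φ₂ p') ⬝ᵥ φ₂ m'))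
      = ∑ i : Fin n → Fin k, ∑ j : Fin n → Fin k,
          ((star (krausWord V₁ i *ᵥ φ₁ p) ⬝ᵥ φ₁ m) *
              conj (star (krausWord V₁ j *ᵥ φ₁ p) ⬝ᵥ φ₁ m)) *
            ((star (krausWord V₂ j *ᵥ φ₂ p') ⬝ᵥ φ₂ m') *
              conj (star (krausWord V₂ i *ᵥ φ₂ p') ⬝ᵥ φ₂ m')) := by
    intro m p m' p'
    rw [map_sum, Finset.sum_mul_sum]
    refine Finset.sum_congr rfl fun i _ => Finset.sum_congr rfl fun j _ => ?_
    simp only [_root_.map_mul, Complex.conj_conj]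
    ring
  simp only [hzz]
  -- Reorder the sums: bring p, p' to the front.
  conv_rhs => rw [sum4_swap]
  refine Finset.sum_congr rfl fun p _ => Finset.sum_congr rfl fun p' _ => ?_
  -- Pull the weight out and move the sums over i, j outside.
  have hw : ∀ (m : Fin d₁) (m' : Fin d₂),
      ((π₁ p : ℂ) * (π₂ p' : ℂ)) *
          (∑ i : Fin n → Fin k, ∑ j : Fin n → Fin k,
            ((star (krausWord V₁ i *ᵥ φ₁ p) ⬝ᵥ φ₁ m) *
                conj (star (krausWord V₁ j *ᵥ φ₁ p) ⬝ᵥ φ₁ m)) *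
              ((star (krausWord V₂ j *ᵥ φ₂ p') ⬝ᵥ φ₂ m') *
                conj (star (krausWord V₂ i *ᵥ φ₂ p') ⬝ᵥ φ₂ m')))
      = ∑ i : Fin n → Fin k, ∑ j : Fin n → Fin k,
          ((π₁ p : ℂ) * (π₂ p' : ℂ)) *
            (((star (krausWord V₁ i *ᵥ φ₁ p) ⬝ᵥ φ₁ m) *
                conj (star (krausWord V₁ j *ᵥ φ₁ p) ⬝ᵥ φ₁ m)) *
              ((star (krausWord V₂ j *ᵥ φ₂ p') ⬝ᵥ φ₂ m') *
                conj (star (krausWord V₂ i *ᵥ φ₂ p') ⬝ᵥ φ₂ m'))) := by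
    intro m m'
    rw [Finset.mul_sum]
    exact Finset.sum_congr rfl fun i _ => by rw [Finset.mul_sum]
  simp only [hw]
  conv_rhs => rw [sum4_rot]
  conv_lhs => rw [Finset.sum_comm]
  refine Finset.sum_congr rfl fun i _ => Finset.sum_congr rfl fun j _ => ?_
  -- Collapse the sums over m and m' using Parseval.
  have hfactor : ∑ m : Fin d₁, ∑ m' : Fin d₂,
      ((π₁ p : ℂ) * (π₂ p' : ℂ)) *
        (((star (krausWord V₁ i *ᵥ φ₁ p) ⬝ᵥ φ₁ m) *
            conj (star (krausWord V₁ j *ᵥ φ₁ p) ⬝ᵥ φ₁ m)) *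
          ((star (krausWord V₂ j *ᵥ φ₂ p') ⬝ᵥ φ₂ m') *
            conj (star (krausWord V₂ i *ᵥ φ₂ p') ⬝ᵥ φ₂ m')))
      = ((π₁ p : ℂ) * (π₂ p' : ℂ)) *
          ((∑ m : Fin d₁, (star (krausWord V₁ i *ᵥ φ₁ p) ⬝ᵥ φ₁ m) *
              conj (star (krausWord V₁ j *ᵥ φ₁ p) ⬝ᵥ φ₁ m)) *
            (∑ m' : Fin d₂, (star (krausWord V₂ j *ᵥ φ₂ p') ⬝ᵥ φ₂ m') *
              conj (star (krausWord V₂ i *ᵥ φ₂ p') ⬝ᵥ φ₂ m'))) := by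
    rw [Finset.sum_mul_sum, Finset.mul_sum]
    refine Finset.sum_congr rfl fun m _ => ?_
    rw [Finset.mul_sum]
  rw [hfactor, aux_parseval φ₁ hon₁, aux_parseval φ₂ hon₂]


end QMCPaper
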